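/- Let n ≥ 1, k ∈ ℕ, N ∈ ℕ. Let f : ℝⁿ → ℂ be of class C^k such that for every multi-index α with |α| ≤ k there is a constant C_α with |∂^α f(x)| ≤ C_α (1+|x|)^{-N} for all x. Let g : ℝⁿ → ℂ be measurable, have vanishing moments of order k, and have decay order N+k+n+1. Let 1 ≤ p ≤ ∞ satisfy N·p > n (this holds automatically when p = ∞). Then there exists a constant C' > 0 such that for all t with 0 < t < 1 one has ‖g ∗ D_t f‖_{L^p(ℝⁿ)} ≤ C' · t^{k+n(1−1/p)}, where 1/p is read as 0 when p = ∞. -/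

import Mathlib

set_option maxHeartbeats 1600000


open MeasureTheory SchwartzMap Filter Topology FourierTransform
open scoped ENNReal ContDiff

noncomputable section

/-- Euclidean space ℝⁿ. -/
abbrev Euc (n : ℕ) := EuclideanSpace ℝ (Fin n)

/-- Convolution of two functions on ℝⁿ: (f ∗ g)(x) = ∫ f(y) g(x − y) dy. -/
def conv {n : ℕ} (f g : Euc n → ℂ) : Euc n → ℂ := fun x => ∫ y, f y * g (x - y)

/-- L¹-normalized dilation: (D_t f)(x) = tⁿ f(t x). -/
def dil (n : ℕ) (t : ℝ) (f : Euc n → ℂ) : Euc n → ℂ := fun x => (t ^ n : ℝ) • f (t • x)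

/-- f^*(x) = conj (f (−x)). -/
def starF {n : ℕ} (f : Euc n → ℂ) : Euc n → ℂ := fun x => (starRingEnd ℂ) (f (-x))

/-- The monomial x ↦ x^α for a multi-index α. -/
def monom {n : ℕ} (α : Fin n → ℕ) (x : Euc n) : ℂ := ∏ i, (x i : ℂ) ^ α i

/-- f has vanishing moments of order k: ∫ f(x) x^α dx = 0 (converging absolutely)
for all multi-indices α with |α| ≤ k − 1, i.e. |α| < k. -/
def HasVanishingMoments {n : ℕ} (k : ℕ) (f : Euc n → ℂ) : Prop :=
  ∀ α : Fin n → ℕ, (∑ i, α i) < k →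
    Integrable (fun x => f x * monom α x) ∧ (∫ x, f x * monom α x) = 0

/-- All moments of f vanish (with absolute convergence of all the integrals). -/
def AllMomentsVanish {n : ℕ} (f : Euc n → ℂ) : Prop :=
  ∀ α : Fin n → ℕ,
    Integrable (fun x => f x * monom α x) ∧ (∫ x, f x * monom α x) = 0

/-- f has decay order N: |f(x)| ≤ C (1 + |x|)^{−N}. -/
def HasDecayOrder {n : ℕ} (N : ℕ) (f : Euc n → ℂ) : Prop :=
  ∃ C : ℝ, ∀ x, ‖f x‖ ≤ C / (1 + ‖x‖) ^ N

/-- Partial derivative in the i-th coordinate direction. -/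
def pd {n : ℕ} (i : Fin n) (f : Euc n → ℂ) : Euc n → ℂ :=
  fun x => fderiv ℝ f x (EuclideanSpace.single i (1 : ℝ))

/-- Iterated partial derivative ∂^α along a multi-index α. -/
def mderiv {n : ℕ} (α : Fin n → ℕ) (f : Euc n → ℂ) : Euc n → ℂ :=
  (List.finRange n).foldr (fun i g => (pd i)^[α i] g) f

/-- Schwartz-type seminorm (valued in [0,∞]): sup over x of (1+|x|)^k ‖D^m f(x)‖. -/
def schwartzSemi {n : ℕ} (k m : ℕ) (f : Euc n → ℂ) : ℝ≥0∞ :=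
  ⨆ x, ENNReal.ofReal ((1 + ‖x‖) ^ k * ‖iteratedFDeriv ℝ m f x‖)

/-- Convergence in the topology of the Schwartz space, along a filter `l`:
all Schwartz seminorms of the difference tend to 0. -/
def TendstoSchwartz {n : ℕ} {ι : Type*} (l : Filter ι) (F : ι → Euc n → ℂ)
    (f : Euc n → ℂ) : Prop :=
  ∀ k m : ℕ, Tendsto (fun N => schwartzSemi k m (fun x => F N x - f x)) l (nhds 0)

/-- A pair (ψ, η) of Schwartz functions is LP-admissible: for every Schwartz function f
with all moments vanishing, ∑_{|j| ≤ N} f ∗ ψ_j^* ∗ η_j → f in the Schwartz topology. -/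
def LPAdmissible {n : ℕ} (ψ η : 𝓢(Euc n, ℂ)) : Prop :=
  ∀ f : 𝓢(Euc n, ℂ), AllMomentsVanish (⇑f) →
    TendstoSchwartz atTop
      (fun N : ℕ => fun x => ∑ j ∈ Finset.Icc (-(N : ℤ)) (N : ℤ),
        conv (conv (⇑f) (starF (dil n ((2:ℝ) ^ j) (⇑ψ)))) (dil n ((2:ℝ) ^ j) (⇑η)) x)
      (⇑f)

/-- A Schwartz function ψ is admissible: for every Schwartz f with all moments vanishing,
∫_ε^A f ∗ D_a(ψ^* ∗ ψ) da/a → f in the Schwartz topology as ε → 0⁺, A → ∞. -/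
def Admissible {n : ℕ} (ψ : 𝓢(Euc n, ℂ)) : Prop :=
  ∀ f : 𝓢(Euc n, ℂ), AllMomentsVanish (⇑f) →
    TendstoSchwartz ((nhdsWithin (0:ℝ) (Set.Ioi 0)) ×ˢ (atTop : Filter ℝ))
      (fun εA : ℝ × ℝ => fun x =>
        ∫ a in Set.Ioc εA.1 εA.2, conv (⇑f) (dil n a (conv (starF ⇑ψ) ⇑ψ)) x / (a : ℂ))
      (⇑f)

section AuxLemmas

variable {n : ℕ}

/-- derivative along direction u -/
def dLine (u : Euc n) (f : Euc n → ℂ) : Euc n → ℂ := fun x => fderiv ℝ f x u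

def dList (l : List (Euc n)) (f : Euc n → ℂ) : Euc n → ℂ :=
  l.foldr dLine f

@[simp] lemma dList_nil (f : Euc n → ℂ) : dList [] f = f := rfl
@[simp] lemma dList_cons (u : Euc n) (l : List (Euc n)) (f : Euc n → ℂ) :
    dList (u :: l) f = dLine u (dList l f) := rfl

lemma dList_append (l₁ l₂ : List (Euc n)) (f : Euc n → ℂ) :
    dList (l₁ ++ l₂) f = dList l₁ (dList l₂ f) := by
  simp [dList, List.foldr_append]

lemma contDiff_dLine {m : ℕ} {f : Euc n → ℂ} (hf : ContDiff ℝ (m + 1 : ℕ) f) (u : Euc n) :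
    ContDiff ℝ (m : ℕ) (dLine u f) := by
  have h1 : ContDiff ℝ (m : ℕ) (fderiv ℝ f) := by
    apply hf.fderiv_right
    exact_mod_cast le_refl ((m : ℕ∞) + 1)
  exact h1.clm_apply contDiff_const

lemma contDiff_dList {m : ℕ} {f : Euc n → ℂ} (l : List (Euc n))
    (hf : ContDiff ℝ (m + l.length : ℕ) f) :
    ContDiff ℝ (m : ℕ) (dList l f) := by
  induction l generalizing m with
  | nil => simpa using hf
  | cons u l ih =>
    rw [dList_cons]
    apply contDiff_dLine
    apply ih
    have : (m + 1) + l.length = m + (u :: l).length := by simp; ring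
    rw [this]; exact hf

lemma dLine_apply_eq (u : Euc n) {h : Euc n → ℂ} (hh : ContDiff ℝ 2 h) (w : Euc n) (x : Euc n) :
    dLine u (dLine w h) x = fderiv ℝ (fderiv ℝ h) x u w := by
  have hdiff : DifferentiableAt ℝ (fderiv ℝ h) x := by
    have : ContDiff ℝ (1 : ℕ) (fderiv ℝ h) := by
      apply hh.fderiv_right; norm_num
    exact this.differentiable (by norm_num) x
  have key : HasFDerivAt (dLine w h)
      ((ContinuousLinearMap.apply ℝ ℂ w).comp (fderiv ℝ (fderiv ℝ h) x)) x := by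
    have h1 : HasFDerivAt (fderiv ℝ h) (fderiv ℝ (fderiv ℝ h) x) x := hdiff.hasFDerivAt
    exact ((ContinuousLinearMap.apply ℝ ℂ w).hasFDerivAt).comp x h1
  rw [dLine, key.fderiv]
  simp

lemma dLine_swap {h : Euc n → ℂ} (hh : ContDiff ℝ 2 h) (u w : Euc n) :
    dLine u (dLine w h) = dLine w (dLine u h) := by
  funext x
  rw [dLine_apply_eq u hh w x, dLine_apply_eq w hh u x]
  have hsymm : IsSymmSndFDerivAt ℝ h x := by
    apply ContDiffAt.isSymmSndFDerivAt hh.contDiffAt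
    norm_num
  exact hsymm u w

lemma dList_perm {l l' : List (Euc n)} (hp : l.Perm l') :
    ∀ f : Euc n → ℂ, ContDiff ℝ (l.length : ℕ) f → dList l f = dList l' f := by
  induction hp with
  | nil => intro f _; rfl
  | cons u hl ih =>
    intro f hf
    simp only [dList_cons]
    rw [ih f (hf.of_le (by exact_mod_cast Nat.le_succ _))]
  | swap u w l =>
    intro f hf
    simp only [dList_cons]
    have h2 : ContDiff ℝ (2 : ℕ) (dList l f) := by
      apply contDiff_dList
      have : (2 + l.length) = (w :: u :: l).length := by simp; ring
      rw [this]; exact hf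
    rw [dLine_swap (by exact_mod_cast h2) w u]
  | trans h₁ h₂ ih₁ ih₂ =>
    intro f hf
    rw [ih₁ f hf, ih₂ f (by rwa [← h₁.length_eq])]

lemma iteratedFDeriv_eq_dList : ∀ (j : ℕ) (f : Euc n → ℂ), ContDiff ℝ (j : ℕ) f →
    ∀ (v : Fin j → Euc n) (x : Euc n),
    iteratedFDeriv ℝ j f x v = dList (List.ofFn v) f x := by
  intro j
  induction j with
  | zero => intro f _ v x; simp [iteratedFDeriv_zero_apply]
  | succ j ih =>
    intro f hf v x
    have hfd : ContDiff ℝ (j : ℕ) (fderiv ℝ f) := by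
      apply hf.fderiv_right
      exact_mod_cast le_refl ((j : ℕ∞) + 1)
    have peel : iteratedFDeriv ℝ (j+1) f x v
        = iteratedFDeriv ℝ j (dLine (v (Fin.last j)) f) x (Fin.init v) := by
      rw [iteratedFDeriv_succ_apply_right]
      have hcomp : dLine (v (Fin.last j)) f
          = (ContinuousLinearMap.apply ℝ ℂ (v (Fin.last j))) ∘ (fderiv ℝ f) := rfl
      rw [hcomp, ContinuousLinearMap.iteratedFDeriv_comp_left _ hfd.contDiffAt (le_refl _)]
      rfl
    rw [peel, ih _ (contDiff_dLine hf _) _ x]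
    have hofn : List.ofFn v = List.ofFn (Fin.init v) ++ [v (Fin.last j)] := by
      rw [List.ofFn_succ', List.concat_eq_append]
      rfl
    rw [hofn, dList_append]
    rfl

def eV (i : Fin n) : Euc n := EuclideanSpace.single i (1:ℝ)

def cnt {j : ℕ} (ι : Fin j → Fin n) (i : Fin n) : ℕ :=
  (Finset.univ.filter fun s => ι s = i).card

def mlist (α : Fin n → ℕ) : List (Euc n) :=
  (List.finRange n).flatMap fun i => List.replicate (α i) (eV i)

lemma dList_replicate (m : ℕ) (u : Euc n) (f : Euc n → ℂ) :
    dList (List.replicate m u) f = (dLine u)^[m] f := by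
  induction m with
  | zero => rfl
  | succ m ih => rw [List.replicate_succ, dList_cons, ih, Function.iterate_succ']; rfl

lemma mderiv_eq_dList (α : Fin n → ℕ) (f : Euc n → ℂ) :
    mderiv α f = dList (mlist α) f := by
  unfold mderiv mlist
  induction (List.finRange n) with
  | nil => rfl
  | cons i L ih =>
    rw [List.foldr_cons, ih, List.flatMap_cons, dList_append, dList_replicate]
    rfl

lemma count_ofFn_eq_cnt {j : ℕ} (ι : Fin j → Fin n) (a : Fin n) :
    (List.ofFn ι).count a = cnt ι a := by
  classical
  have h1 : cnt ι a = ((List.finRange j).filter (fun s => decide (ι s = a))).length := by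
    rw [cnt, Fin.univ_def]
    rfl
  rw [h1, List.ofFn_eq_map, List.count, List.countP_map, List.countP_eq_length_filter]
  congr 1

lemma count_flatMap_replicate (β : Fin n → ℕ) (a : Fin n) :
    ∀ L : List (Fin n), L.Nodup → a ∈ L →
    (L.flatMap fun i => List.replicate (β i) i).count a = β a := by
  intro L
  induction L with
  | nil => intro _ h; simp at h
  | cons i L ih =>
    intro hnd hmem
    rcases List.nodup_cons.mp hnd with ⟨hniL, hndL⟩
    rw [List.flatMap_cons, List.count_append]
    by_cases hai : a = i
    · subst hai
      have hz : (L.flatMap fun i => List.replicate (β i) i).count a = 0 := by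
        rw [List.count_eq_zero]
        intro h
        rcases List.mem_flatMap.mp h with ⟨c, hcL, hbc⟩
        rcases List.eq_of_mem_replicate hbc with rfl
        exact hniL hcL
      simp [hz, List.count_replicate]
    · have hmem' : a ∈ L := by
        rcases List.mem_cons.mp hmem with h | h
        · exact absurd h hai
        · exact h
      rw [ih hndL hmem', List.count_replicate, if_neg (by simpa using Ne.symm hai)]
      simp

lemma sum_cnt {j : ℕ} (ι : Fin j → Fin n) : ∑ i, cnt ι i = j := by
  classical
  have := Finset.card_eq_sum_card_fiberwise (f := ι) (s := Finset.univ) (t := Finset.univ)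
    (fun s _ => Finset.mem_univ (ι s))
  simpa [cnt] using this.symm

lemma perm_ofFn_mlist {j : ℕ} (ι : Fin j → Fin n) :
    (List.ofFn fun s => eV (ι s)).Perm (mlist (cnt ι)) := by
  classical
  have h1 : (List.ofFn fun s => eV (ι s)) = (List.ofFn ι).map eV := by
    rw [List.map_ofFn]; rfl
  have h2 : mlist (cnt ι)
      = ((List.finRange n).flatMap fun i => List.replicate (cnt ι i) i).map eV := by
    rw [List.map_flatMap]
    unfold mlist
    congr 1
    funext i
    rw [List.map_replicate]
  rw [h1, h2]
  apply List.Perm.map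
  rw [List.perm_iff_count]
  intro a
  rw [count_ofFn_eq_cnt,
    count_flatMap_replicate (cnt ι) a (List.finRange n) (List.nodup_finRange n)
      (List.mem_finRange a)]

lemma iteratedFDeriv_basis {k : ℕ} {f : Euc n → ℂ} (hf : ContDiff ℝ (k : ℕ) f)
    {j : ℕ} (hj : j ≤ k) (ι : Fin j → Fin n) (x : Euc n) :
    iteratedFDeriv ℝ j f x (fun s => eV (ι s)) = mderiv (cnt ι) f x := by
  rw [iteratedFDeriv_eq_dList j f (hf.of_le (by exact_mod_cast hj)) _ x, mderiv_eq_dList]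
  have hlen : ContDiff ℝ ((List.ofFn fun s => eV (ι s)).length : ℕ) f := by
    rw [List.length_ofFn]
    exact hf.of_le (by exact_mod_cast hj)
  exact congrFun (dList_perm (perm_ofFn_mlist ι) f hlen) x

lemma eucl_decomp (x : Euc n) : x = ∑ i, x i • eV i := by
  ext i
  rw [WithLp.ofLp_sum, Finset.sum_apply]
  simp [eV, EuclideanSpace.single_apply]

lemma multilinear_expand {j : ℕ} (D : ContinuousMultilinearMap ℝ (fun _ : Fin j => Euc n) ℂ)
    (m : Fin j → Euc n) :
    D m = ∑ ι : Fin j → Fin n, (∏ s, m s (ι s)) • D (fun s => eV (ι s)) := by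
  classical
  conv_lhs => rw [show m = fun s => ∑ i, m s i • eV i from funext fun s => eucl_decomp (m s)]
  rw [D.map_sum (α := fun _ => Fin n)]
  congr 1
  funext ι
  rw [D.map_smul_univ]

lemma coord_abs_le_norm (x : Euc n) (i : Fin n) : |x i| ≤ ‖x‖ := by
  rw [EuclideanSpace.norm_eq]
  have : |x i| = Real.sqrt (|x i|^2) := by
    rw [Real.sqrt_sq_eq_abs, abs_abs]
  rw [this]
  apply Real.sqrt_le_sqrt
  have : |x i|^2 = ‖x i‖^2 := by rw [Real.norm_eq_abs]
  rw [this]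
  exact Finset.single_le_sum (f := fun i => ‖x i‖^2) (fun i _ => sq_nonneg _) (Finset.mem_univ i)

lemma iteratedFDeriv_decay {k N : ℕ} {f : Euc n → ℂ} (hf : ContDiff ℝ (k : ℕ) f)
    (hd : ∀ α : Fin n → ℕ, (∑ i, α i) ≤ k →
      ∃ Cα : ℝ, ∀ x, ‖mderiv α f x‖ ≤ Cα / (1 + ‖x‖) ^ N)
    {j : ℕ} (hj : j ≤ k) :
    ∃ M : ℝ, 0 ≤ M ∧ ∀ x, ‖iteratedFDeriv ℝ j f x‖ ≤ M / (1 + ‖x‖) ^ N := by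
  classical
  choose C hC using fun ι : Fin j → Fin n => hd (cnt ι) (by rw [sum_cnt]; exact hj)
  have hCnn : ∀ ι : Fin j → Fin n, 0 ≤ C ι := by
    intro ι
    have hP : (0:ℝ) < (1 + ‖(0 : Euc n)‖) ^ N := by positivity
    have h3 : 0 ≤ C ι / (1 + ‖(0 : Euc n)‖) ^ N :=
      le_trans (norm_nonneg _) (hC ι 0)
    by_contra hneg
    push_neg at hneg
    exact absurd h3 (not_le.mpr (div_neg_of_neg_of_pos hneg hP))
  refine ⟨∑ ι : Fin j → Fin n, C ι, Finset.sum_nonneg (fun ι _ => hCnn ι), ?_⟩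
  intro x
  have hPpos : (0:ℝ) < (1 + ‖x‖) ^ N :=
    pow_pos (by positivity) N
  apply ContinuousMultilinearMap.opNorm_le_bound (div_nonneg
    (Finset.sum_nonneg (fun ι _ => hCnn ι)) hPpos.le)
  intro m
  rw [multilinear_expand]
  calc ‖∑ ι : Fin j → Fin n, (∏ s, m s (ι s)) • iteratedFDeriv ℝ j f x (fun s => eV (ι s))‖
      ≤ ∑ ι : Fin j → Fin n, ‖(∏ s, m s (ι s)) • iteratedFDeriv ℝ j f x (fun s => eV (ι s))‖ :=
        norm_sum_le _ _
    _ ≤ ∑ ι : Fin j → Fin n, (∏ s, ‖m s‖) * (C ι / (1 + ‖x‖) ^ N) := by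
        apply Finset.sum_le_sum
        intro ι _
        rw [norm_smul, iteratedFDeriv_basis hf hj ι x]
        have h1 : ‖∏ s, m s (ι s)‖ ≤ ∏ s, ‖m s‖ := by
          rw [Real.norm_eq_abs, Finset.abs_prod]
          apply Finset.prod_le_prod (fun s _ => abs_nonneg _)
          intro s _
          exact coord_abs_le_norm (m s) (ι s)
        exact mul_le_mul h1 (hC ι x) (norm_nonneg _)
          (Finset.prod_nonneg fun s _ => norm_nonneg _)
    _ = (∑ ι : Fin j → Fin n, C ι) / (1 + ‖x‖) ^ N * ∏ s, ‖m s‖ := by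
        rw [← Finset.mul_sum, Finset.sum_div]
        ring

lemma taylor_line {k : ℕ} {f : Euc n → ℂ} (hf : ContDiff ℝ (k : ℕ) f) (z v : Euc n)
    {C : ℝ}
    (hC : ∀ s ∈ Set.Icc (0:ℝ) 1, ‖iteratedFDeriv ℝ k f (z + s • v)‖ ≤ C) :
    ‖f (z + v) - ∑ j ∈ Finset.range k,
        ((j.factorial : ℝ))⁻¹ • iteratedFDeriv ℝ j f z (fun _ => v)‖
      ≤ C * ‖v‖ ^ k / (k-1).factorial := by
  rcases Nat.eq_zero_or_pos k with rfl | hk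
  · have h0 : iteratedFDeriv ℝ 0 f (z + (1:ℝ) • v) 0 = f (z + v) := by
      rw [iteratedFDeriv_zero_apply]
      norm_num
    have hfin : ‖f (z + v)‖ ≤ C := by
      calc ‖f (z + v)‖ = ‖iteratedFDeriv ℝ 0 f (z + (1:ℝ) • v)‖ := by
            rw [← h0, ← ContinuousMultilinearMap.fin0_apply_norm]
        _ ≤ C := hC 1 (by norm_num)
    simpa using hfin
  -- main case k ≥ 1
  set φ : ℝ → ℂ := fun s => f (z + s • v) with hφdef
  have hA : ContDiff ℝ (k : ℕ) (fun s : ℝ => z + s • v) :=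
    contDiff_const.add (contDiff_id.smul contDiff_const)
  have hφ : ContDiff ℝ (k : ℕ) φ := hf.comp hA
  -- identify iterated derivatives of φ
  have hiterate : ∀ j : ℕ, j ≤ k →
      deriv^[j] φ = (fun s => dList (List.replicate j v) f (z + s • v)) := by
    intro j
    induction j with
    | zero => intro _; rfl
    | succ j ih =>
      intro hjk
      have hprev := ih (le_trans (Nat.le_succ j) hjk)
      have hsm : ContDiff ℝ ((1:ℕ) : ℕ) (dList (List.replicate j v) f) := by
        apply contDiff_dList
        rw [List.length_replicate]
        exact hf.of_le (by exact_mod_cast (by omega : 1 + j ≤ k))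
      have hdiff : Differentiable ℝ (dList (List.replicate j v) f) :=
        hsm.differentiable (by norm_num)
      funext s₀
      have hAd : HasDerivAt (fun s : ℝ => z + s • v) v s₀ := by
        have h1 : HasDerivAt (fun s : ℝ => s • v) ((1:ℝ) • v) s₀ :=
          (hasDerivAt_id s₀).smul_const v
        rw [one_smul] at h1
        exact h1.const_add z
      have hcomp : HasDerivAt (fun s => dList (List.replicate j v) f (z + s • v))
          (fderiv ℝ (dList (List.replicate j v) f) (z + s₀ • v) v) s₀ :=
        ((hdiff (z + s₀ • v)).hasFDerivAt).comp_hasDerivAt s₀ hAd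
      rw [Function.iterate_succ_apply', hprev, hcomp.deriv, List.replicate_succ, dList_cons]
      rfl
  have hid : ∀ j : ℕ, j ≤ k → ∀ s : ℝ,
      iteratedDeriv j φ s = iteratedFDeriv ℝ j f (z + s • v) (fun _ => v) := by
    intro j hj s
    rw [iteratedDeriv_eq_iterate, hiterate j hj]
    have h2 := iteratedFDeriv_eq_dList (n := n) j f (hf.of_le (by exact_mod_cast hj))
      (fun _ => v) (z + s • v)
    rw [h2, List.ofFn_const]
  have huniq : UniqueDiffOn ℝ (Set.Icc (0:ℝ) 1) := uniqueDiffOn_Icc zero_lt_one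
  have hts : HasFTaylorSeriesUpToOn (k : ℕ∞) φ (ftaylorSeries ℝ φ) (Set.Icc (0:ℝ) 1) := by
    have := (contDiff_iff_ftaylorSeries (n := (k : ℕ∞))).mp (by exact_mod_cast hφ)
    exact this.hasFTaylorSeriesUpToOn _
  have hwithin : ∀ j : ℕ, j ≤ k → ∀ s ∈ Set.Icc (0:ℝ) 1,
      iteratedDerivWithin j φ (Set.Icc 0 1) s = iteratedDeriv j φ s := by
    intro j hj s hs
    rw [iteratedDerivWithin_eq_iteratedFDerivWithin, iteratedDeriv_eq_iteratedFDeriv]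
    have h2 := hts.eq_iteratedFDerivWithin_of_uniqueDiffOn
      (m := j) (by exact_mod_cast hj) huniq hs
    rw [← h2]
    rfl
  obtain ⟨m, rfl⟩ : ∃ m, k = m + 1 := ⟨k - 1, (Nat.succ_pred_eq_of_pos hk).symm⟩
  have hbound : ∀ y ∈ Set.Icc (0:ℝ) 1,
      ‖iteratedDerivWithin (m+1) φ (Set.Icc 0 1) y‖ ≤ C * ‖v‖ ^ (m+1) := by
    intro y hy
    rw [hwithin (m+1) le_rfl y hy, hid (m+1) le_rfl y]
    calc ‖iteratedFDeriv ℝ (m+1) f (z + y • v) (fun _ => v)‖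
        ≤ ‖iteratedFDeriv ℝ (m+1) f (z + y • v)‖ * ∏ _s : Fin (m+1), ‖v‖ :=
          ContinuousMultilinearMap.le_opNorm _ _
      _ ≤ C * ‖v‖ ^ (m+1) := by
          rw [Finset.prod_const, Finset.card_univ, Fintype.card_fin]
          exact mul_le_mul_of_nonneg_right (hC y hy) (pow_nonneg (norm_nonneg v) _)
  have htay := taylor_mean_remainder_bound (f := φ) (a := 0) (b := 1) (n := m) (x := 1)
      zero_le_one (by exact_mod_cast hφ.contDiffOn) (by norm_num) hbound
  have hTW : taylorWithinEval φ m (Set.Icc (0:ℝ) 1) 0 1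
      = ∑ j ∈ Finset.range (m+1),
          ((j.factorial : ℝ))⁻¹ • iteratedFDeriv ℝ j f z (fun _ => v) := by
    rw [taylor_within_apply]
    apply Finset.sum_congr rfl
    intro j hj
    have hjm : j ≤ m + 1 := by
      have := Finset.mem_range.mp hj
      omega
    rw [hwithin j hjm 0 (by norm_num), hid j hjm 0]
    have hz : z + (0:ℝ) • v = z := by rw [zero_smul, add_zero]
    rw [hz]
    norm_num
  have hφ1 : φ 1 = f (z + v) := by
    simp only [hφdef, one_smul]
  rw [← hφ1, ← hTW]
  calc ‖φ 1 - taylorWithinEval φ m (Set.Icc (0:ℝ) 1) 0 1‖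
      ≤ C * ‖v‖ ^ (m+1) * (1 - 0) ^ (m+1) / m.factorial := htay
    _ = C * ‖v‖ ^ (m+1) / (m + 1 - 1).factorial := by
        norm_num

lemma prod_coord_eq_monom {j : ℕ} (ι : Fin j → Fin n) (y : Euc n) :
    (∏ s : Fin j, (y (ι s) : ℂ)) = monom (cnt ι) y := by
  classical
  rw [monom,
    ← Finset.prod_fiberwise_of_maps_to (fun s (_ : s ∈ Finset.univ) => Finset.mem_univ (ι s))
      (fun s => (y (ι s) : ℂ))]
  apply Finset.prod_congr rfl
  intro i _
  have : ∀ s ∈ Finset.univ.filter (fun s => ι s = i), (y (ι s) : ℂ) = (y i : ℂ) := by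
    intro s hs
    rw [(Finset.mem_filter.mp hs).2]
  rw [Finset.prod_congr rfl this, Finset.prod_const, cnt]

lemma poly_moment {k : ℕ} {g : Euc n → ℂ} (hg : HasVanishingMoments k g)
    {j : ℕ} (hj : j < k) (D : ContinuousMultilinearMap ℝ (fun _ : Fin j => Euc n) ℂ) (c : ℝ) :
    Integrable (fun y => g y * D (fun _ => c • y)) ∧
    (∫ y, g y * D (fun _ => c • y)) = 0 := by
  classical
  have hmom : ∀ ι : Fin j → Fin n,
      Integrable (fun y => g y * monom (cnt ι) y) ∧
      (∫ y, g y * monom (cnt ι) y) = 0 :=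
    fun ι => hg (cnt ι) (by rw [sum_cnt]; exact hj)
  have h_eq : (fun y => g y * D (fun _ => c • y))
      = fun y => ∑ ι : Fin j → Fin n,
          (((c : ℂ)^j * D (fun s => eV (ι s))) * (g y * monom (cnt ι) y)) := by
    funext y
    rw [multilinear_expand, Finset.mul_sum]
    apply Finset.sum_congr rfl
    intro ι _
    have h1 : (∏ s : Fin j, (c • y) (ι s)) = c^j * ∏ s : Fin j, y (ι s) := by
      have : ∀ s : Fin j, (c • y) (ι s) = c * y (ι s) := fun s => rfl
      rw [Finset.prod_congr rfl (fun s _ => this s), Finset.prod_mul_distrib,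
        Finset.prod_const, Finset.card_univ, Fintype.card_fin]
    rw [h1, Complex.real_smul, ← prod_coord_eq_monom ι y]
    push_cast
    ring
  constructor
  · rw [h_eq]
    apply integrable_finset_sum
    intro ι _
    exact ((hmom ι).1).const_mul _
  · rw [h_eq, integral_finset_sum _ (fun ι _ => ((hmom ι).1).const_mul _)]
    apply Finset.sum_eq_zero
    intro ι _
    rw [MeasureTheory.integral_const_mul, (hmom ι).2, mul_zero]

lemma Jint (m : ℕ) (hm : n ≤ m) :
    Integrable (fun y : Euc n => (((1 + ‖y‖) ^ (m+1) : ℝ))⁻¹) := by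
  have h1 : Integrable (fun y : Euc n => (1 + ‖y‖) ^ (-((m:ℝ)+1))) := by
    apply integrable_one_add_norm
    rw [finrank_euclideanSpace_fin]
    have : (n:ℝ) ≤ (m:ℝ) := by exact_mod_cast hm
    linarith
  apply h1.congr
  filter_upwards with y
  have hb : (0:ℝ) ≤ 1 + ‖y‖ := by positivity
  rw [Real.rpow_neg hb, show ((m:ℝ)+1) = ((m+1 : ℕ) : ℝ) by push_cast; ring,
    Real.rpow_natCast]

lemma conv_pointwise_bound (k N : ℕ) (f g : Euc n → ℂ)
    (hf_smooth : ContDiff ℝ (k : ℕ) f)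
    (hf_decay : ∀ α : Fin n → ℕ, (∑ i, α i) ≤ k →
      ∃ Cα : ℝ, ∀ x, ‖mderiv α f x‖ ≤ Cα / (1 + ‖x‖) ^ N)
    (hg_meas : Measurable g)
    (hg_mom : HasVanishingMoments k g)
    (hg_decay : HasDecayOrder (N + k + n + 1) g) :
    ∃ A : ℝ, 0 ≤ A ∧ ∀ t : ℝ, 0 < t → t < 1 → ∀ x : Euc n,
      ‖conv g (dil n t f) x‖ ≤ A * t ^ (n + k) * (((1 + t * ‖x‖) ^ N : ℝ))⁻¹ := by
  classical
  obtain ⟨Cg, hCg⟩ := hg_decay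
  have hCg0 : 0 ≤ Cg := by
    have h1 := (norm_nonneg (g 0)).trans (hCg 0)
    have h2 : (1 + ‖(0 : Euc n)‖) ^ (N+k+n+1) = 1 := by simp
    rw [h2, div_one] at h1
    exact h1
  obtain ⟨Mk, hMk0, hMk⟩ := iteratedFDeriv_decay hf_smooth hf_decay (le_refl k)
  obtain ⟨M0, hM00, hM0⟩ := iteratedFDeriv_decay hf_smooth hf_decay (Nat.zero_le k)
  have hfbd : ∀ w, ‖f w‖ ≤ M0 := by
    intro w
    have h1 := hM0 w
    rw [norm_iteratedFDeriv_zero] at h1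
    refine h1.trans ?_
    have hb : (1:ℝ) ≤ (1 + ‖w‖) ^ N := one_le_pow₀ (by linarith [norm_nonneg w])
    calc M0 / (1 + ‖w‖) ^ N ≤ M0 / 1 := div_le_div_of_nonneg_left hM00 one_pos hb
      _ = M0 := div_one M0
  have hJ : Integrable (fun y : Euc n => (((1 + ‖y‖) ^ (n+1) : ℝ))⁻¹) := Jint n le_rfl
  set J : ℝ := ∫ y : Euc n, (((1 + ‖y‖) ^ (n+1) : ℝ))⁻¹ with hJdef
  have hJ0 : 0 ≤ J := integral_nonneg (fun y => by positivity)
  have hgbd : ∀ y : Euc n, ‖g y‖ * ‖y‖ ^ k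
      ≤ Cg * (((1 + ‖y‖) ^ (n+1) : ℝ))⁻¹ * (((1 + ‖y‖) ^ N : ℝ))⁻¹ := by
    intro y
    have hb : (0:ℝ) < 1 + ‖y‖ := by positivity
    calc ‖g y‖ * ‖y‖ ^ k
        ≤ (Cg / (1 + ‖y‖) ^ (N+k+n+1)) * (1 + ‖y‖) ^ k := by
          apply mul_le_mul (hCg y) (pow_le_pow_left₀ (norm_nonneg y) (by linarith) k)
            (pow_nonneg (norm_nonneg y) k)
            (div_nonneg hCg0 (pow_nonneg hb.le _))
      _ = Cg * (((1 + ‖y‖) ^ (n+1) : ℝ))⁻¹ * (((1 + ‖y‖) ^ N : ℝ))⁻¹ := by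
          rw [show N+k+n+1 = k + ((n+1) + N) by ring]
          rw [pow_add, pow_add]
          field_simp
  have hgsimple : ∀ y : Euc n, ‖g y‖ ≤ Cg * (((1 + ‖y‖) ^ (n+1) : ℝ))⁻¹ := by
    intro y
    have hb : (0:ℝ) < 1 + ‖y‖ := by positivity
    have hple : ((1 + ‖y‖) ^ (n+1) : ℝ) ≤ (1 + ‖y‖) ^ (N+k+n+1) :=
      pow_le_pow_right₀ (by linarith [norm_nonneg y]) (by omega)
    calc ‖g y‖ ≤ Cg / (1 + ‖y‖) ^ (N+k+n+1) := hCg y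
      _ ≤ Cg / (1 + ‖y‖) ^ (n+1) :=
          div_le_div_of_nonneg_left hCg0 (by positivity) hple
      _ = Cg * (((1 + ‖y‖) ^ (n+1) : ℝ))⁻¹ := by rw [div_eq_mul_inv]
  refine ⟨Mk * Cg * 2^N / (k-1).factorial * J, by positivity, ?_⟩
  intro t ht ht1 x
  set z : Euc n := t • x with hz
  have hx0 : (0:ℝ) ≤ ‖x‖ := norm_nonneg x
  have hPx : (0:ℝ) < (1 + t * ‖x‖) ^ N := by positivity
  have harg : ∀ y : Euc n, t • (x - y) = z + (-t) • y := by
    intro y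
    rw [smul_sub, neg_smul, sub_eq_add_neg]
  have hconv : conv g (dil n t f) x = (t^n : ℝ) • ∫ y, g y * f (z + (-t) • y) := by
    rw [conv]
    have : (fun y => g y * dil n t f (x - y))
        = fun y => (t^n : ℝ) • (g y * f (z + (-t) • y)) := by
      funext y
      rw [dil, harg y, mul_smul_comm]
    rw [this, integral_smul]
  set P : Euc n → ℂ := fun y => ∑ j ∈ Finset.range k,
    ((j.factorial : ℝ))⁻¹ • iteratedFDeriv ℝ j f z (fun _ => (-t) • y) with hPdef
  have hfcont : Continuous f := hf_smooth.continuous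
  have hfi : Integrable (fun y => g y * f (z + (-t) • y)) := by
    apply Integrable.mono' (hJ.const_mul (Cg * M0))
    · have hcont2 : Continuous (fun y : Euc n => z + (-t) • y) :=
        continuous_const.add (continuous_id.const_smul (-t))
      exact (hg_meas.aestronglyMeasurable.mul
        ((hfcont.comp hcont2).aestronglyMeasurable))
    · filter_upwards with y
      rw [norm_mul]
      calc ‖g y‖ * ‖f (z + (-t) • y)‖
          ≤ (Cg * (((1 + ‖y‖) ^ (n+1) : ℝ))⁻¹) * M0 :=
            mul_le_mul (hgsimple y) (hfbd _) (norm_nonneg _) (by positivity)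
        _ = Cg * M0 * (((1 + ‖y‖) ^ (n+1) : ℝ))⁻¹ := by ring
  have hPmom : ∀ j ∈ Finset.range k,
      Integrable (fun y => g y * iteratedFDeriv ℝ j f z (fun _ => (-t) • y)) ∧
      (∫ y, g y * iteratedFDeriv ℝ j f z (fun _ => (-t) • y)) = 0 :=
    fun j hj => poly_moment hg_mom (Finset.mem_range.mp hj) _ (-t)
  have hgP_eq : (fun y => g y * P y) = fun y => ∑ j ∈ Finset.range k,
      ((j.factorial : ℝ))⁻¹ • (g y * iteratedFDeriv ℝ j f z (fun _ => (-t) • y)) := by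
    funext y
    rw [hPdef, Finset.mul_sum]
    apply Finset.sum_congr rfl
    intro j _
    rw [mul_smul_comm]
  have hPi : Integrable (fun y => g y * P y) := by
    rw [hgP_eq]
    exact integrable_finset_sum _ (fun j hj => ((hPmom j hj).1).smul ((j.factorial : ℝ))⁻¹)
  have hPzero : (∫ y, g y * P y) = 0 := by
    have hint : ∀ j ∈ Finset.range k, Integrable (fun y =>
        ((j.factorial : ℝ))⁻¹ • (g y * iteratedFDeriv ℝ j f z (fun _ => (-t) • y))) :=
      fun j hj => ((hPmom j hj).1).smul ((j.factorial : ℝ))⁻¹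
    have h8 := integral_finset_sum (Finset.range k) hint
    rw [hgP_eq, h8]
    apply Finset.sum_eq_zero
    intro j hj
    rw [integral_smul, (hPmom j hj).2, smul_zero]
  have hsplit : (∫ y, g y * f (z + (-t) • y))
      = ∫ y, g y * (f (z + (-t) • y) - P y) := by
    have h1 : (fun y => g y * (f (z + (-t) • y) - P y))
        = fun y => g y * f (z + (-t) • y) - g y * P y := by
      funext y; ring
    rw [h1, integral_sub hfi hPi, hPzero, sub_zero]
  have hrem : ∀ y : Euc n, ‖g y * (f (z + (-t) • y) - P y)‖
      ≤ (Mk * Cg * 2^N / (k-1).factorial) * t^k * (((1 + t * ‖x‖) ^ N : ℝ))⁻¹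
        * (((1 + ‖y‖) ^ (n+1) : ℝ))⁻¹ := by
    intro y
    set v : Euc n := (-t) • y with hv
    have hnv : ‖v‖ = t * ‖y‖ := by
      rw [hv, norm_smul, Real.norm_eq_abs, abs_neg, abs_of_pos ht]
    have hbase : ∀ s : ℝ, s ∈ Set.Icc (0:ℝ) 1 →
        ‖iteratedFDeriv ℝ k f (z + s • v)‖ ≤ Mk / (1 + ‖z + s • v‖) ^ N :=
      fun s _ => hMk _
    by_cases hcase : 2 * ‖y‖ ≤ ‖x‖
    · have hseg : ∀ s ∈ Set.Icc (0:ℝ) 1,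
          ‖iteratedFDeriv ℝ k f (z + s • v)‖ ≤ Mk * 2^N * (((1 + t * ‖x‖) ^ N : ℝ))⁻¹ := by
        intro s hs
        have h2 : ‖z‖ = t * ‖x‖ := by
          rw [hz, norm_smul, Real.norm_eq_abs, abs_of_pos ht]
        have h1 : ‖z‖ ≤ ‖z + s • v‖ + ‖s • v‖ := by
          calc ‖z‖ = ‖(z + s • v) + (-(s • v))‖ := by rw [add_neg_cancel_right]
            _ ≤ ‖z + s • v‖ + ‖-(s • v)‖ := norm_add_le _ _
            _ = ‖z + s • v‖ + ‖s • v‖ := by rw [norm_neg]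
        have h3 : ‖s • v‖ ≤ t * ‖y‖ := by
          rw [norm_smul, hnv, Real.norm_eq_abs, abs_of_nonneg hs.1]
          nlinarith [hs.2, mul_nonneg ht.le (norm_nonneg y)]
        have hlow : t * ‖x‖ / 2 ≤ ‖z + s • v‖ := by
          nlinarith [mul_le_mul_of_nonneg_left hcase ht.le]
        have hpow : (1 + t * ‖x‖) ^ N ≤ 2^N * (1 + ‖z + s • v‖) ^ N := by
          have h4 : 1 + t * ‖x‖ ≤ 2 * (1 + ‖z + s • v‖) := by nlinarith
          calc (1 + t * ‖x‖) ^ N ≤ (2 * (1 + ‖z + s • v‖)) ^ N :=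
                pow_le_pow_left₀ (by positivity) h4 N
            _ = 2^N * (1 + ‖z + s • v‖) ^ N := mul_pow 2 _ N
        have hposn : (0:ℝ) < (1 + ‖z + s • v‖) ^ N := by positivity
        calc ‖iteratedFDeriv ℝ k f (z + s • v)‖ ≤ Mk / (1 + ‖z + s • v‖) ^ N :=
              hbase s hs
          _ ≤ Mk * 2^N * (((1 + t * ‖x‖) ^ N : ℝ))⁻¹ := by
              rw [← div_eq_mul_inv, div_le_div_iff₀ hposn hPx]
              nlinarith [hpow, hMk0, hposn.le, hPx.le]
      have htay := taylor_line hf_smooth z v hseg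
      rw [norm_mul]
      calc ‖g y‖ * ‖f (z + v) - P y‖
          ≤ ‖g y‖ * ((Mk * 2^N * (((1 + t * ‖x‖) ^ N : ℝ))⁻¹) * ‖v‖^k / (k-1).factorial) :=
            mul_le_mul_of_nonneg_left htay (norm_nonneg _)
        _ = (Mk * 2^N / (k-1).factorial) * t^k * (((1 + t * ‖x‖) ^ N : ℝ))⁻¹
              * (‖g y‖ * ‖y‖^k) := by
            rw [hnv, mul_pow]; ring
        _ ≤ (Mk * 2^N / (k-1).factorial) * t^k * (((1 + t * ‖x‖) ^ N : ℝ))⁻¹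
              * (Cg * (((1 + ‖y‖) ^ (n+1) : ℝ))⁻¹) := by
            apply mul_le_mul_of_nonneg_left _ (by positivity)
            refine (hgbd y).trans ?_
            have h6 : (((1 + ‖y‖) ^ N : ℝ))⁻¹ ≤ 1 := by
              rw [inv_le_one_iff₀]
              right
              exact one_le_pow₀ (by linarith [norm_nonneg y])
            calc Cg * (((1 + ‖y‖) ^ (n+1) : ℝ))⁻¹ * (((1 + ‖y‖) ^ N : ℝ))⁻¹
                ≤ Cg * (((1 + ‖y‖) ^ (n+1) : ℝ))⁻¹ * 1 :=
                  mul_le_mul_of_nonneg_left h6 (by positivity)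
              _ = Cg * (((1 + ‖y‖) ^ (n+1) : ℝ))⁻¹ := mul_one _
        _ = (Mk * Cg * 2^N / (k-1).factorial) * t^k * (((1 + t * ‖x‖) ^ N : ℝ))⁻¹
              * (((1 + ‖y‖) ^ (n+1) : ℝ))⁻¹ := by ring
    · push_neg at hcase
      have hseg : ∀ s ∈ Set.Icc (0:ℝ) 1,
          ‖iteratedFDeriv ℝ k f (z + s • v)‖ ≤ Mk := by
        intro s hs
        refine (hbase s hs).trans ?_
        have hb : (1:ℝ) ≤ (1 + ‖z + s • v‖) ^ N :=
          one_le_pow₀ (by linarith [norm_nonneg (z + s • v)])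
        calc Mk / (1 + ‖z + s • v‖) ^ N ≤ Mk / 1 :=
              div_le_div_of_nonneg_left hMk0 one_pos hb
          _ = Mk := div_one Mk
      have htay := taylor_line hf_smooth z v hseg
      rw [norm_mul]
      have hposy : (0:ℝ) < (1 + ‖y‖) ^ N := by positivity
      have hNbd : (((1 + ‖y‖) ^ N : ℝ))⁻¹ ≤ 2^N * (((1 + t * ‖x‖) ^ N : ℝ))⁻¹ := by
        have h4 : 1 + t * ‖x‖ ≤ 2 * (1 + ‖y‖) := by
          nlinarith [norm_nonneg y, norm_nonneg x]
        have h5 : (1 + t * ‖x‖) ^ N ≤ 2^N * (1 + ‖y‖) ^ N := by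
          calc (1 + t * ‖x‖) ^ N ≤ (2 * (1 + ‖y‖)) ^ N := pow_le_pow_left₀ (by positivity) h4 N
            _ = 2^N * (1 + ‖y‖) ^ N := mul_pow 2 _ N
        rw [← one_div, ← div_eq_mul_inv, div_le_div_iff₀ hposy hPx]
        nlinarith [h5, hposy.le, hPx.le]
      calc ‖g y‖ * ‖f (z + v) - P y‖
          ≤ ‖g y‖ * (Mk * ‖v‖^k / (k-1).factorial) :=
            mul_le_mul_of_nonneg_left htay (norm_nonneg _)
        _ = (Mk / (k-1).factorial) * t^k * (‖g y‖ * ‖y‖^k) := by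
            rw [hnv, mul_pow]; ring
        _ ≤ (Mk / (k-1).factorial) * t^k *
            (Cg * (((1 + ‖y‖) ^ (n+1) : ℝ))⁻¹ * (((1 + ‖y‖) ^ N : ℝ))⁻¹) := by
            apply mul_le_mul_of_nonneg_left (hgbd y) (by positivity)
        _ ≤ (Mk / (k-1).factorial) * t^k *
            (Cg * (((1 + ‖y‖) ^ (n+1) : ℝ))⁻¹ * (2^N * (((1 + t * ‖x‖) ^ N : ℝ))⁻¹)) := by
            apply mul_le_mul_of_nonneg_left _ (by positivity)
            apply mul_le_mul_of_nonneg_left hNbd (by positivity)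
        _ = (Mk * Cg * 2^N / (k-1).factorial) * t^k * (((1 + t * ‖x‖) ^ N : ℝ))⁻¹
            * (((1 + ‖y‖) ^ (n+1) : ℝ))⁻¹ := by ring
  have hmaj : Integrable (fun y : Euc n =>
      (Mk * Cg * 2^N / (k-1).factorial) * t^k * (((1 + t * ‖x‖) ^ N : ℝ))⁻¹
        * (((1 + ‖y‖) ^ (n+1) : ℝ))⁻¹) := by
    have := hJ.const_mul ((Mk * Cg * 2^N / (k-1).factorial) * t^k
      * (((1 + t * ‖x‖) ^ N : ℝ))⁻¹)
    exact this
  have hIbd : ‖∫ y, g y * (f (z + (-t) • y) - P y)‖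
      ≤ (Mk * Cg * 2^N / (k-1).factorial) * t^k * (((1 + t * ‖x‖) ^ N : ℝ))⁻¹ * J := by
    have h7 := norm_integral_le_of_norm_le hmaj (Filter.Eventually.of_forall hrem)
    refine h7.trans ?_
    rw [MeasureTheory.integral_const_mul]
  rw [hconv, hsplit, norm_smul, Real.norm_eq_abs, abs_of_pos (pow_pos ht n)]
  calc t^n * ‖∫ y, g y * (f (z + (-t) • y) - P y)‖
      ≤ t^n * ((Mk * Cg * 2^N / (k-1).factorial) * t^k * (((1 + t * ‖x‖) ^ N : ℝ))⁻¹ * J) :=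
        mul_le_mul_of_nonneg_left hIbd (by positivity)
    _ = (Mk * Cg * 2^N / (k-1).factorial * J) * t^(n+k) * (((1 + t * ‖x‖) ^ N : ℝ))⁻¹ := by
        rw [pow_add]; ring

end AuxLemmas

/-- Lemma 3.12(a) of the paper (L^p estimate), for G = ℝⁿ:
‖g ∗ D_t f‖_p ≤ C' t^{k + n(1 − 1/p)} for 0 < t < 1, provided N p > n
(which holds automatically for p = ∞). -/
theorem statement1 (n : ℕ) (hn : 1 ≤ n) (k N : ℕ) (f g : Euc n → ℂ)
    (hf_smooth : ContDiff ℝ k f)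
    (hf_decay : ∀ α : Fin n → ℕ, (∑ i, α i) ≤ k →
      ∃ Cα : ℝ, ∀ x, ‖mderiv α f x‖ ≤ Cα / (1 + ‖x‖) ^ N)
    (hg_meas : Measurable g)
    (hg_mom : HasVanishingMoments k g)
    (hg_decay : HasDecayOrder (N + k + n + 1) g)
    (p : ℝ≥0∞) (hp : 1 ≤ p)
    (hNp : p = ⊤ ∨ (n : ℝ) < (N : ℝ) * p.toReal) :
    ∃ C' : ℝ, 0 < C' ∧ ∀ t : ℝ, 0 < t → t < 1 →
      eLpNorm (conv g (dil n t f)) p volume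
        ≤ ENNReal.ofReal (C' * t ^ ((k : ℝ) + (n : ℝ) * (1 - p.toReal⁻¹))) := by
  obtain ⟨A, hA0, hA⟩ := conv_pointwise_bound k N f g hf_smooth hf_decay hg_meas hg_mom hg_decay
  by_cases hptop : p = ⊤
  · subst hptop
    refine ⟨A + 1, by linarith, ?_⟩
    intro t ht ht1
    have hb : ∀ x, ‖conv g (dil n t f) x‖ ≤ A * t^(n+k) := by
      intro x
      refine (hA t ht ht1 x).trans ?_
      have h1 : (((1 + t * ‖x‖)^N : ℝ))⁻¹ ≤ 1 := by
        rw [inv_le_one_iff₀]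
        right
        exact one_le_pow₀ (by nlinarith [mul_nonneg ht.le (norm_nonneg x)])
      calc A * t^(n+k) * (((1 + t*‖x‖)^N : ℝ))⁻¹ ≤ A * t^(n+k) * 1 := by
            apply mul_le_mul_of_nonneg_left h1 (by positivity)
        _ = A * t^(n+k) := mul_one _
    rw [eLpNorm_exponent_top]
    refine (eLpNormEssSup_le_of_ae_bound (C := A * t^(n+k))
      (Filter.Eventually.of_forall hb)).trans ?_
    apply ENNReal.ofReal_le_ofReal
    have hrp : t ^ ((k:ℝ) + (n:ℝ) * (1 - (⊤ : ℝ≥0∞).toReal⁻¹)) = t^(n+k) := by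
      rw [show (k:ℝ) + (n:ℝ) * (1 - (⊤ : ℝ≥0∞).toReal⁻¹) = ((n+k : ℕ) : ℝ) by
        simp; push_cast; ring]
      exact Real.rpow_natCast t (n+k)
    rw [hrp]
    nlinarith [pow_nonneg ht.le (n+k)]
  · have hp0 : p ≠ 0 := by
      rintro rfl
      exact absurd hp (by simp)
    set p' := p.toReal with hp'def
    have hp'1 : 1 ≤ p' := by
      rw [hp'def, ← ENNReal.toReal_one]
      exact ENNReal.toReal_mono hptop hp
    have hp'pos : 0 < p' := lt_of_lt_of_le one_pos hp'1
    have hNp' : (n:ℝ) < (N:ℝ) * p' := hNp.resolve_left hptop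
    have hF_int : Integrable (fun u : Euc n => (1 + ‖u‖) ^ (-((N:ℝ) * p'))) := by
      apply integrable_one_add_norm
      rw [finrank_euclideanSpace_fin]
      exact hNp'
    set I : ℝ := ∫ u : Euc n, (1 + ‖u‖) ^ (-((N:ℝ) * p')) with hIdef
    have hI0 : 0 ≤ I := integral_nonneg (fun u => Real.rpow_nonneg (by positivity) _)
    refine ⟨(A + 1) * (I + 1) ^ (1/p'), by positivity, ?_⟩
    intro t ht ht1
    set c : ℝ := A * t^(n+k) with hcdef
    have hc0 : 0 ≤ c := by positivity
    set φ : Euc n → ℝ := fun x => c * (((1 + t * ‖x‖)^N : ℝ))⁻¹ with hφdef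
    have hφ0 : ∀ x, 0 ≤ φ x := fun x => by
      have : (0:ℝ) < 1 + t * ‖x‖ := by nlinarith [mul_nonneg ht.le (norm_nonneg x)]
      positivity
    have h2 : eLpNorm (conv g (dil n t f)) p volume ≤ eLpNorm φ p volume :=
      eLpNorm_mono_real (fun x => hA t ht ht1 x)
    set ψ : Euc n → ℝ := fun x => φ x ^ p' with hψdef
    have hψ_eq : ψ = fun x => c ^ p' * (1 + ‖t • x‖) ^ (-((N:ℝ) * p')) := by
      funext x
      have hb0 : (0:ℝ) < 1 + t * ‖x‖ := by nlinarith [mul_nonneg ht.le (norm_nonneg x)]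
      have hns : ‖t • x‖ = t * ‖x‖ := by
        rw [norm_smul, Real.norm_eq_abs, abs_of_pos ht]
      simp only [hψdef, hφdef, hns]
      have hbpow : ((1 + t * ‖x‖)^N : ℝ)⁻¹ = (1 + t * ‖x‖) ^ (-(N:ℝ)) := by
        rw [← Real.rpow_natCast (1 + t * ‖x‖) N, ← Real.rpow_neg hb0.le]
      rw [hbpow, Real.mul_rpow hc0 (Real.rpow_nonneg hb0.le _), ← Real.rpow_mul hb0.le]
      ring_nf
    have hψ_nn : ∀ x, 0 ≤ ψ x := fun x => Real.rpow_nonneg (hφ0 x) _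
    have hψ_int : Integrable ψ := by
      rw [hψ_eq]
      exact (hF_int.comp_smul ht.ne').const_mul _
    have htn : (0:ℝ) < t^n := pow_pos ht n
    have hint_eq : (∫ x, ψ x) = c ^ p' * ((t^n)⁻¹ * I) := by
      rw [hψ_eq, MeasureTheory.integral_const_mul]
      congr 1
      have h6 := MeasureTheory.Measure.integral_comp_smul
        (μ := (volume : Measure (Euc n))) (fun u : Euc n => (1 + ‖u‖) ^ (-((N:ℝ) * p'))) t
      rw [finrank_euclideanSpace_fin] at h6
      rw [h6, smul_eq_mul, abs_of_pos (inv_pos.mpr htn)]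
    have h3 : eLpNorm φ p volume = (∫⁻ x, (‖φ x‖₊ : ℝ≥0∞) ^ p') ^ (1/p') :=
      eLpNorm_eq_lintegral_rpow_enorm_toReal hp0 hptop
    have h4 : ∀ x, (‖φ x‖₊ : ℝ≥0∞) ^ p' = ENNReal.ofReal (ψ x) := by
      intro x
      rw [← enorm_eq_nnnorm, ← ofReal_norm, Real.norm_of_nonneg (hφ0 x),
        ENNReal.ofReal_rpow_of_nonneg (hφ0 x) hp'pos.le]
    have h5 : (∫⁻ x, ENNReal.ofReal (ψ x)) = ENNReal.ofReal (c ^ p' * ((t^n)⁻¹ * I)) := by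
      rw [← hint_eq]
      exact (ofReal_integral_eq_lintegral_ofReal hψ_int
        (Filter.Eventually.of_forall hψ_nn)).symm
    have hreal : (c ^ p' * ((t^n)⁻¹ * I)) ^ (1/p')
        ≤ (A + 1) * (I + 1) ^ (1/p') * t ^ ((k:ℝ) + (n:ℝ) * (1 - p.toReal⁻¹)) := by
      have hr1 : (c ^ p' * ((t^n)⁻¹ * I)) ^ (1/p')
          = c * (((t^n)⁻¹) ^ (1/p') * I ^ (1/p')) := by
        rw [Real.mul_rpow (Real.rpow_nonneg hc0 _) (by positivity),
          Real.mul_rpow (by positivity) hI0,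
          ← Real.rpow_mul hc0, mul_one_div_cancel hp'pos.ne', Real.rpow_one]
      rw [hr1]
      have htinv : ((t^n)⁻¹) ^ (1/p') = t ^ (-((n:ℝ)/p')) := by
        rw [← Real.rpow_natCast t n, ← Real.rpow_neg ht.le, ← Real.rpow_mul ht.le]
        congr 1
        ring
      have htnk : t^(n+k) = t ^ (((n:ℝ)+(k:ℝ))) := by
        rw [show ((n:ℝ)+(k:ℝ)) = ((n+k : ℕ) : ℝ) by push_cast; ring, Real.rpow_natCast]
      have hexp : t ^ (((n:ℝ)+(k:ℝ))) * t ^ (-((n:ℝ)/p'))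
          = t ^ ((k:ℝ) + (n:ℝ) * (1 - p.toReal⁻¹)) := by
        rw [← Real.rpow_add ht]
        congr 1
        rw [← hp'def]
        field_simp
        ring
      calc c * (((t^n)⁻¹) ^ (1/p') * I ^ (1/p'))
          = A * (t ^ (((n:ℝ)+(k:ℝ))) * t ^ (-((n:ℝ)/p'))) * I ^ (1/p') := by
            rw [hcdef, htinv, htnk]; ring
        _ = A * I ^ (1/p') * t ^ ((k:ℝ) + (n:ℝ) * (1 - p.toReal⁻¹)) := by
            rw [hexp]; ring
        _ ≤ (A + 1) * (I + 1) ^ (1/p') * t ^ ((k:ℝ) + (n:ℝ) * (1 - p.toReal⁻¹)) := by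
            have hI' : I ^ (1/p') ≤ (I + 1) ^ (1/p') :=
              Real.rpow_le_rpow hI0 (by linarith) (by positivity)
            have htE : (0:ℝ) ≤ t ^ ((k:ℝ) + (n:ℝ) * (1 - p.toReal⁻¹)) :=
              Real.rpow_nonneg ht.le _
            have hAI : A * I ^ (1/p') ≤ (A + 1) * (I + 1) ^ (1/p') := by
              apply mul_le_mul (by linarith) hI' (Real.rpow_nonneg hI0 _) (by linarith)
            exact mul_le_mul_of_nonneg_right hAI htE
    calc eLpNorm (conv g (dil n t f)) p volume ≤ eLpNorm φ p volume := h2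
      _ = (∫⁻ x, ENNReal.ofReal (ψ x)) ^ (1/p') := by
          rw [h3]
          congr 1
          exact lintegral_congr h4
      _ = (ENNReal.ofReal (c ^ p' * ((t^n)⁻¹ * I))) ^ (1/p') := by rw [h5]
      _ = ENNReal.ofReal ((c ^ p' * ((t^n)⁻¹ * I)) ^ (1/p')) :=
          ENNReal.ofReal_rpow_of_nonneg (by positivity) (by positivity)
      _ ≤ ENNReal.ofReal ((A + 1) * (I + 1) ^ (1/p')
            * t ^ ((k:ℝ) + (n:ℝ) * (1 - p.toReal⁻¹))) := ENNReal.ofReal_le_ofReal hreal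


end
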